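/- Reduction of R factors computes the global R factor: if a tall matrix A is partitioned into row blocks A₁, ..., A_p, and Rᵢ is the R factor of a QR factorization of Aᵢ, then the R factor (with positive diagonal) of the stacked matrix [R₁; ...; R_p] equals the R factor (with positive diagonal) of A, assuming A has full column rank. -/
import Mathlib


open Matrix Finset


lemma chol_unique (n : ℕ) (S T : Matrix (Fin n) (Fin n) ℝ)
    (hSut : ∀ k l : Fin n, l < k → S k l = 0)
    (hSpos : ∀ k : Fin n, 0 < S k k)
    (hTut : ∀ k l : Fin n, l < k → T k l = 0)
    (hTpos : ∀ k : Fin n, 0 < T k k)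
    (hST : Sᵀ * S = Tᵀ * T) : S = T := by
  have hSbt : S.BlockTriangular id := fun i j h => hSut i j h
  have hTbt : T.BlockTriangular id := fun i j h => hTut i j h
  have hdS : IsUnit S.det := by
    rw [Matrix.det_of_upperTriangular hSbt]
    exact (Finset.prod_pos (fun i _ => hSpos i)).ne'.isUnit
  have hdT : IsUnit T.det := by
    rw [Matrix.det_of_upperTriangular hTbt]
    exact (Finset.prod_pos (fun i _ => hTpos i)).ne'.isUnit
  haveI := S.invertibleOfIsUnitDet hdS
  haveI := T.invertibleOfIsUnitDet hdT
  set U := S * T⁻¹ with hU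
  have hUinv : T * S⁻¹ * U = 1 := by
    rw [hU, Matrix.mul_assoc, ← Matrix.mul_assoc (S⁻¹), Matrix.nonsing_inv_mul S hdS,
      Matrix.one_mul, Matrix.mul_nonsing_inv T hdT]
  have hUbt : U.BlockTriangular id :=
    hSbt.mul (blockTriangular_inv_of_blockTriangular hTbt)
  have hUinvbt : (U⁻¹).BlockTriangular id := by
    rw [Matrix.inv_eq_left_inv hUinv]
    exact hTbt.mul (blockTriangular_inv_of_blockTriangular hSbt)
  have hUo : Uᵀ * U = 1 := by
    rw [hU, Matrix.transpose_mul]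
    calc (T⁻¹)ᵀ * Sᵀ * (S * T⁻¹) = (T⁻¹)ᵀ * (Sᵀ * S) * T⁻¹ := by
          simp only [Matrix.mul_assoc]
      _ = (T⁻¹)ᵀ * Tᵀ * (T * T⁻¹) := by rw [hST]; simp only [Matrix.mul_assoc]
      _ = (T * T⁻¹)ᵀ * (T * T⁻¹) := by rw [Matrix.transpose_mul]
      _ = 1 := by rw [Matrix.mul_nonsing_inv T hdT]; simp
  have hUTeq : Uᵀ = U⁻¹ := Matrix.inv_eq_left_inv hUo ▸ rfl
  have hUdiag : ∀ i j : Fin n, i ≠ j → U i j = 0 := by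
    intro i j hij
    rcases lt_or_gt_of_ne hij with h | h
    · have : Uᵀ j i = 0 := by rw [hUTeq]; exact hUinvbt h
      simpa using this
    · exact hUbt h
  have hUST : U * T = S := by
    rw [hU, Matrix.mul_assoc, Matrix.nonsing_inv_mul T hdT, Matrix.mul_one]
  have hUdd : ∀ i : Fin n, U i i = 1 := by
    intro i
    have hSi : S i i = U i i * T i i := by
      rw [← hUST, Matrix.mul_apply, Finset.sum_eq_single i]
      · intro b _ hb; rw [hUdiag i b (Ne.symm hb), zero_mul]
      · simp
    have hpos : 0 < U i i := by
      by_contra h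
      push_neg at h
      nlinarith [hSpos i, hTpos i]
    have h2 : (Uᵀ * U) i i = 1 := by rw [hUo]; simp
    rw [Matrix.mul_apply, Finset.sum_eq_single i] at h2
    · simp only [Matrix.transpose_apply] at h2
      nlinarith
    · intro b _ hb
      simp [hUdiag b i hb]
    · simp
  have hU1 : U = 1 := by
    ext i j
    by_cases h : i = j
    · subst h; simp [hUdd i]
    · simp [hUdiag i j h, Matrix.one_apply_ne h]
  rw [← hUST, hU1, Matrix.one_mul]


/-- Reduction of R factors computes the global R factor: if each row block Aᵢ
of a full column rank matrix A has QR factorization Aᵢ = QᵢRᵢ, then the R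
factor with positive diagonal of the stacked matrix [R₁; …; R_p] equals the
R factor with positive diagonal of A.  (The R factor with positive diagonal
of a matrix B is the unique upper triangular R with positive diagonal such
that RᵀR = BᵀB; the Gram matrix of a row-partitioned matrix is the sum of
the Gram matrices of its blocks.) -/
theorem reduction_computes_global_R (p n : ℕ) (m : Fin p → ℕ)
    (A : ∀ i : Fin p, Matrix (Fin (m i)) (Fin n) ℝ)
    (Q : ∀ i : Fin p, Matrix (Fin (m i)) (Fin n) ℝ)
    (R : Fin p → Matrix (Fin n) (Fin n) ℝ)
    (hQ : ∀ i, (Q i)ᵀ * Q i = 1)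
    (hRut : ∀ i, ∀ k l : Fin n, l < k → R i k l = 0)
    (hQR : ∀ i, A i = Q i * R i)
    -- A has full column rank, i.e. its Gram matrix ∑ᵢ AᵢᵀAᵢ is positive definite
    (hpd : (∑ i, (A i)ᵀ * A i).PosDef)
    -- S is the positive-diagonal R factor of the stacked matrix [R₁; …; R_p]
    (S : Matrix (Fin n) (Fin n) ℝ)
    (hSut : ∀ k l : Fin n, l < k → S k l = 0)
    (hSpos : ∀ k : Fin n, 0 < S k k)
    (hS : Sᵀ * S = ∑ i, (R i)ᵀ * R i)
    -- T is the positive-diagonal R factor of A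
    (T : Matrix (Fin n) (Fin n) ℝ)
    (hTut : ∀ k l : Fin n, l < k → T k l = 0)
    (hTpos : ∀ k : Fin n, 0 < T k k)
    (hT : Tᵀ * T = ∑ i, (A i)ᵀ * A i) :
    S = T := by
  have key : ∀ i, (A i)ᵀ * A i = (R i)ᵀ * R i := by
    intro i
    rw [hQR i, Matrix.transpose_mul, Matrix.mul_assoc, ← Matrix.mul_assoc (Q i)ᵀ, hQ i,
      Matrix.one_mul]
  have hST : Sᵀ * S = Tᵀ * T := by
    rw [hS, hT]
    exact Finset.sum_congr rfl fun i _ => (key i).symm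
  exact chol_unique n S T hSut hSpos hTut hTpos hST
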